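/- There exists a constant c > 0 such that for every integer k ≥ 2, every real ε with exp(−k) ≤ ε ≤ 1/4, and every real polynomial p satisfying sup_{x ∈ [−1,1]} |x^k − p(x)| ≤ ε, the degree d of p satisfies d ≥ c · √(k · ln(1/ε)). -/

import Mathlib

open Polynomial Finset

noncomputable def gpoly (p : ℝ[X]) : ℂ[X] :=
  ∑ i ∈ Finset.range (p.natDegree + 1),
    C ((p.coeff i : ℂ) / 2 ^ i) * X ^ (p.natDegree - i) * (X ^ 2 + 1) ^ i

lemma gpoly_eval (p : ℝ[X]) {t : ℂ} (ht : t ≠ 0) :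
    (gpoly p).eval t
      = t ^ p.natDegree * ∑ i ∈ Finset.range (p.natDegree + 1),
          (p.coeff i : ℂ) * ((t + t⁻¹) / 2) ^ i := by
  rw [gpoly, eval_finset_sum, Finset.mul_sum]
  refine Finset.sum_congr rfl fun i hi => ?_
  have hid : i ≤ p.natDegree := Nat.lt_succ_iff.mp (Finset.mem_range.mp hi)
  have htd : t ^ p.natDegree = t ^ (p.natDegree - i) * t ^ i := by
    rw [← pow_add, Nat.sub_add_cancel hid]
  simp only [eval_mul, eval_pow, eval_add, eval_C, eval_X, eval_one]
  rw [htd]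
  have h1 : t + t⁻¹ = (t ^ 2 + 1) / t := by field_simp
  rw [h1, div_div, div_pow]
  rw [mul_pow]
  have h2 : (t:ℂ) ^ i ≠ 0 := pow_ne_zero _ ht
  field_simp

lemma gpoly_palindrome (p : ℝ[X]) {t : ℂ} (ht : t ≠ 0) :
    (gpoly p).eval t = t ^ (2 * p.natDegree) * (gpoly p).eval t⁻¹ := by
  have hti : t⁻¹ ≠ 0 := inv_ne_zero ht
  rw [gpoly_eval p ht, gpoly_eval p hti, inv_inv]
  rw [add_comm t⁻¹ t]
  rw [← mul_assoc]
  congr 1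
  rw [inv_pow, two_mul, pow_add, mul_assoc,
    mul_inv_cancel₀ (pow_ne_zero _ ht), mul_one]

lemma gpoly_eval_real (p : ℝ[X]) {t : ℝ} (ht : t ≠ 0) :
    (gpoly p).eval (t : ℂ) = (t : ℂ) ^ p.natDegree * ((p.eval ((t + t⁻¹) / 2) : ℝ) : ℂ) := by
  rw [gpoly_eval p (by exact_mod_cast ht)]
  congr 1
  rw [Polynomial.eval_eq_sum_range]
  push_cast
  rfl

lemma gpoly_norm_le (p : ℝ[X]) {M : ℝ}
    (hb : ∀ x ∈ Set.Icc (-1 : ℝ) 1, |p.eval x| ≤ M) {s : ℂ} (hs : ‖s‖ ≤ 1) :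
    ‖(gpoly p).eval s‖ ≤ M := by
  have hM : 0 ≤ M := le_trans (abs_nonneg _) (hb 0 (by constructor <;> norm_num))
  have hsphere : ∀ z : ℂ, ‖z‖ = 1 → ‖(gpoly p).eval z‖ ≤ M := by
    intro z hz
    have hz0 : z ≠ 0 := by intro h; rw [h] at hz; simp at hz
    have hinv : z⁻¹ = starRingEnd ℂ z := by
      rw [Complex.inv_def, Complex.normSq_eq_norm_sq, hz]
      simp [mul_comm]
    have hre : (z + z⁻¹) / 2 = ((z.re : ℝ) : ℂ) := by
      rw [hinv, Complex.add_conj]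
      push_cast; ring
    rw [gpoly_eval p hz0, hre]
    have : ∑ i ∈ Finset.range (p.natDegree + 1), ((p.coeff i : ℂ)) * ((z.re : ℝ) : ℂ) ^ i
        = ((p.eval z.re : ℝ) : ℂ) := by
      rw [Polynomial.eval_eq_sum_range]; push_cast; rfl
    rw [this, norm_mul, norm_pow, hz, one_pow, one_mul, Complex.norm_real]
    refine hb _ ?_
    have := Complex.abs_re_le_norm z
    rw [hz] at this
    constructor <;> [linarith [abs_le.mp this] ; linarith [(abs_le.mp this).2]]
  refine Complex.norm_le_of_forall_mem_frontier_norm_le (Metric.isBounded_ball (x := (0:ℂ)) (r := 1))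
    ((gpoly p).differentiable.diffContOnCl) ?_ ?_
  · intro z hz
    rw [frontier_ball (0:ℂ) one_ne_zero] at hz
    exact hsphere z (by simpa using hz)
  · rw [closure_ball (0:ℂ) one_ne_zero]
    simpa using hs

lemma cheb_growth (p : ℝ[X]) {M : ℝ}
    (hb : ∀ x ∈ Set.Icc (-1 : ℝ) 1, |p.eval x| ≤ M) {x : ℝ} (hx : 1 ≤ x) :
    |p.eval x| ≤ M * (x + Real.sqrt (x ^ 2 - 1)) ^ p.natDegree := by
  have hs0 : (0:ℝ) ≤ x ^ 2 - 1 := by nlinarith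
  set t := x + Real.sqrt (x ^ 2 - 1) with htdef
  have hsq : Real.sqrt (x ^ 2 - 1) ^ 2 = x ^ 2 - 1 := Real.sq_sqrt hs0
  have ht1 : 1 ≤ t := le_add_of_le_of_nonneg hx (Real.sqrt_nonneg _)
  have ht0 : (0:ℝ) < t := lt_of_lt_of_le one_pos ht1
  have hinv : t⁻¹ = x - Real.sqrt (x ^ 2 - 1) :=
    inv_eq_of_mul_eq_one_right (by nlinarith)
  have hmid : (t + t⁻¹) / 2 = x := by rw [hinv]; ring
  have h1 : (gpoly p).eval (t : ℂ) = (t : ℂ) ^ p.natDegree * ((p.eval x : ℝ) : ℂ) := by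
    rw [gpoly_eval_real p ht0.ne', hmid]
  have h2 : ‖(gpoly p).eval (t : ℂ)‖ ≤ t ^ (2 * p.natDegree) * M := by
    rw [gpoly_palindrome p (by exact_mod_cast ht0.ne' : (t:ℂ) ≠ 0)]
    rw [norm_mul, norm_pow, Complex.norm_real, Real.norm_eq_abs, abs_of_pos ht0]
    refine mul_le_mul_of_nonneg_left ?_ (by positivity)
    refine gpoly_norm_le p hb ?_
    rw [← Complex.ofReal_inv, Complex.norm_real, Real.norm_eq_abs,
      abs_of_pos (inv_pos.mpr ht0)]
    exact inv_le_one_of_one_le₀ ht1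
  rw [h1] at h2
  simp only [norm_mul, norm_pow, Complex.norm_real, Real.norm_eq_abs] at h2
  rw [abs_of_pos ht0, two_mul, pow_add, mul_assoc] at h2
  have hpow : (0:ℝ) < t ^ p.natDegree := pow_pos ht0 _
  have h3 := le_of_mul_le_mul_left h2 hpow
  linarith [h3, mul_comm (t ^ p.natDegree) M]

set_option maxHeartbeats 1000000 in
theorem polynomial_approx_pow_degree_lower_bound :
    ∃ c : ℝ, 0 < c ∧
      ∀ k : ℕ, 2 ≤ k →
        ∀ ε : ℝ, Real.exp (-(k : ℝ)) ≤ ε → ε ≤ 1 / 4 →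
          ∀ p : ℝ[X], (∀ x ∈ Set.Icc (-1 : ℝ) 1, |x ^ k - p.eval x| ≤ ε) →
            c * Real.sqrt ((k : ℝ) * Real.log (1 / ε)) ≤ (p.natDegree : ℝ) := by
  refine ⟨1/20, by norm_num, ?_⟩
  intro k hk ε hε1 hε2 p hb
  have hε0 : (0:ℝ) < ε := lt_of_lt_of_le (Real.exp_pos _) hε1
  set L : ℝ := Real.log (1/ε) with hLdef
  have hLε : Real.log ε = -L := by
    rw [hLdef, one_div, Real.log_inv, neg_neg]
  have hL4 : Real.log 4 ≤ L := by
    rw [hLdef]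
    apply Real.log_le_log (by norm_num)
    rw [le_one_div (by norm_num) hε0]
    linarith
  have hL0 : (0:ℝ) < L := lt_of_lt_of_le (Real.log_pos (by norm_num)) hL4
  have hK0 : (0:ℝ) < (k:ℝ) := by positivity
  have hLk : L ≤ (k:ℝ) := by
    have : Real.exp (-(k:ℝ)) ≤ Real.exp (Real.log ε) := by
      rwa [Real.exp_log hε0]
    have := Real.exp_le_exp.mp this
    rw [hLε] at this; linarith
  set u : ℝ := L / (k:ℝ) with hudef
  have hu0 : 0 < u := div_pos hL0 hK0
  have hu1 : u ≤ 1 := (div_le_one hK0).mpr hLk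
  set a : ℝ := Real.sqrt u with hadef
  have ha0 : 0 < a := Real.sqrt_pos.mpr hu0
  have ha2 : a ^ 2 = u := Real.sq_sqrt hu0.le
  have ha1 : a ≤ 1 := by
    rw [hadef]; exact Real.sqrt_le_one.mpr hu1
  set r : ℝ := Real.exp (-u) with hrdef
  have hr0 : 0 < r := Real.exp_pos _
  have hr1 : r ≤ 1 := Real.exp_le_one_iff.mpr (by linarith)
  have hrk : r ^ k = ε := by
    rw [hrdef, ← Real.exp_nat_mul]
    rw [show (k:ℝ) * (-u) = -L by rw [hudef, mul_neg, mul_div_cancel₀ _ hK0.ne']]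
    rw [← hLε, Real.exp_log hε0]
  -- the scaled polynomial
  set q : ℝ[X] := p.comp (C r * X) with hqdef
  have hqd : q.natDegree = p.natDegree := by
    rw [hqdef, natDegree_comp, natDegree_C_mul_X r hr0.ne', mul_one]
  have hqe : ∀ y : ℝ, q.eval y = p.eval (r * y) := by
    intro y; rw [hqdef]; simp [eval_comp]
  have hqb : ∀ y ∈ Set.Icc (-1:ℝ) 1, |q.eval y| ≤ 2 * ε := by
    intro y hy
    obtain ⟨hy1, hy2⟩ := hy
    have hmem : r * y ∈ Set.Icc (-1:ℝ) 1 := by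
      constructor <;> nlinarith
    have h1 := hb (r * y) hmem
    have h2 : |(r * y) ^ k| ≤ ε := by
      rw [abs_pow, ← hrk]
      apply pow_le_pow_left₀ (abs_nonneg _)
      rw [abs_mul, abs_of_pos hr0]
      calc r * |y| ≤ r * 1 := by
            apply mul_le_mul_of_nonneg_left _ hr0.le
            rw [abs_le]; exact ⟨hy1, hy2⟩
        _ = r := mul_one r
    rw [hqe]
    calc |p.eval (r * y)| = |(r*y)^k - ((r*y)^k - p.eval (r*y))| := by congr 1; ring
      _ ≤ |(r*y)^k| + |(r*y)^k - p.eval (r*y)| := abs_sub _ _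
      _ ≤ ε + ε := add_le_add h2 h1
      _ = 2 * ε := by ring
  -- growth point
  set z : ℝ := Real.exp u with hzdef
  have hz1 : 1 ≤ z := Real.one_le_exp hu0.le
  have hrz : r * z = 1 := by
    rw [hrdef, hzdef, ← Real.exp_add]; simp
  have hgrow := cheb_growth q hqb hz1
  rw [hqd, hqe, hrz] at hgrow
  -- bound the growth factor
  have hz2 : z ^ 2 - 1 ≤ 16 * u := by
    have e1 : z ^ 2 = Real.exp (2 * u) := by
      rw [hzdef, ← Real.exp_nat_mul]; norm_num [mul_comm]
    have e2 : 1 - 2*u ≤ Real.exp (-(2*u)) := by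
      have := Real.add_one_le_exp (-(2*u)); linarith
    have e3 : Real.exp (2*u) ≤ 8 := by
      have h8 : Real.exp (2*u) ≤ Real.exp 2 := Real.exp_le_exp.mpr (by linarith)
      have h9 : Real.exp 2 = Real.exp 1 ^ 2 := by
        rw [← Real.exp_nat_mul]; norm_num
      have := Real.exp_one_lt_d9
      nlinarith [Real.exp_pos 1]
    have e4 : Real.exp (2*u) * Real.exp (-(2*u)) = 1 := by
      rw [← Real.exp_add]; simp
    nlinarith [Real.exp_pos (2*u)]
  have hsq16 : Real.sqrt (z ^ 2 - 1) ≤ 4 * a := by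
    calc Real.sqrt (z ^ 2 - 1) ≤ Real.sqrt (16 * u) := Real.sqrt_le_sqrt hz2
      _ = 4 * a := by
          rw [Real.sqrt_mul (by norm_num : (0:ℝ) ≤ 16), hadef,
            show (16:ℝ) = 4^2 by norm_num, Real.sqrt_sq (by norm_num : (0:ℝ) ≤ 4)]
  have hbase : z + Real.sqrt (z ^ 2 - 1) ≤ Real.exp (5 * a) := by
    have h1 : z ≤ Real.exp a := by
      rw [hzdef]
      apply Real.exp_le_exp.mpr
      nlinarith
    have h2 : 4*a + 1 ≤ Real.exp (4*a) := by
      have := Real.add_one_le_exp (4*a); linarith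
    have h3 : Real.exp (5*a) = Real.exp a * Real.exp (4*a) := by
      rw [← Real.exp_add]; ring_nf
    have h4 : 1 ≤ Real.exp a := Real.one_le_exp ha0.le
    nlinarith [Real.exp_pos a]
  set d := p.natDegree with hddef
  have hpow : (z + Real.sqrt (z^2-1)) ^ d ≤ Real.exp (5 * a) ^ d := by
    apply pow_le_pow_left₀ _ hbase
    have := Real.sqrt_nonneg (z^2-1); linarith
  have hexp : Real.exp (5*a) ^ d = Real.exp ((d:ℝ) * (5*a)) := by
    rw [← Real.exp_nat_mul]
  -- lower bound on |p.eval 1|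
  have hp1 : 3/4 ≤ p.eval 1 := by
    have := hb 1 (by constructor <;> norm_num)
    rw [one_pow] at this
    have := (abs_le.mp this).2
    linarith
  have hfin : 3/4 ≤ 2 * ε * Real.exp ((d:ℝ) * (5*a)) := by
    calc (3:ℝ)/4 ≤ p.eval 1 := hp1
      _ ≤ |p.eval 1| := le_abs_self _
      _ ≤ 2*ε * (z + Real.sqrt (z^2-1)) ^ d := hgrow
      _ ≤ 2*ε * Real.exp (5*a) ^ d := by
          apply mul_le_mul_of_nonneg_left hpow (by linarith)
      _ = 2*ε * Real.exp ((d:ℝ)*(5*a)) := by rw [hexp]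
  -- take logs
  have hlog : Real.log 3 - Real.log 8 + L ≤ (d:ℝ) * (5*a) := by
    have h1 : (3:ℝ)/(8*ε) ≤ Real.exp ((d:ℝ)*(5*a)) := by
      rw [div_le_iff₀ (by positivity)]
      nlinarith
    have h2 := (Real.log_le_iff_le_exp (by positivity : (0:ℝ) < 3/(8*ε))).mpr h1
    rw [Real.log_div (by norm_num) (by positivity), Real.log_mul (by norm_num) hε0.ne',
      hLε] at h2
    linarith
  -- numeric: log 8 - log 3 ≤ (3/4) L
  have hnum : Real.log 8 - Real.log 3 ≤ (3/4) * L := by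
    have h1 : Real.log 4096 ≤ Real.log 5184 :=
      Real.log_le_log (by norm_num) (by norm_num)
    have h2 : Real.log 4096 = 4 * Real.log 8 := by
      rw [show (4096:ℝ) = 8^4 by norm_num, Real.log_pow]; norm_num
    have h3 : Real.log 5184 = 3 * Real.log 4 + 4 * Real.log 3 := by
      rw [show (5184:ℝ) = 4^3 * 3^4 by norm_num,
        Real.log_mul (by norm_num) (by norm_num), Real.log_pow, Real.log_pow]
      norm_num
    have h4 : 3 * Real.log 4 ≤ 3 * L := by linarith
    linarith
  have hkey : L / 4 ≤ 5 * a * (d:ℝ) := by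
    have e : (d:ℝ) * (5*a) = 5 * a * (d:ℝ) := by ring
    linarith
  -- conclude
  set s : ℝ := Real.sqrt L with hsdef
  set sk : ℝ := Real.sqrt (k:ℝ) with hskdef
  have hs0 : 0 < s := Real.sqrt_pos.mpr hL0
  have hsk0 : 0 < sk := Real.sqrt_pos.mpr hK0
  have hs2 : s ^ 2 = L := Real.sq_sqrt hL0.le
  have hask : a * sk = s := by
    rw [hadef, hudef, hskdef, hsdef, ← Real.sqrt_mul (by positivity)]
    congr 1
    field_simp
  have hsplit : Real.sqrt ((k:ℝ) * L) = sk * s := by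
    rw [hskdef, hsdef, ← Real.sqrt_mul hK0.le]
  rw [hsplit]
  have k1 : L/4 * sk ≤ 5 * a * (d:ℝ) * sk := mul_le_mul_of_nonneg_right hkey hsk0.le
  have k2 : 5 * a * (d:ℝ) * sk = 5 * s * (d:ℝ) := by
    rw [show 5 * a * (d:ℝ) * sk = 5 * (a * sk) * (d:ℝ) by ring, hask]
  rw [k2, ← hs2] at k1
  have k3 : s * (s * sk / 4) ≤ s * (5 * (d:ℝ)) := by
    calc s * (s * sk / 4) = s ^ 2 / 4 * sk := by ring
      _ ≤ 5 * s * (d:ℝ) := k1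
      _ = s * (5 * (d:ℝ)) := by ring
  have k4 : s * sk / 4 ≤ 5 * (d:ℝ) := le_of_mul_le_mul_left k3 hs0
  linarith
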